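/- Let α, β ∈ ℕ³ with β₀ = 0, β₁ ≥ 1, β₂ ≥ 1, α₀ ≥ 1 and ‖α+β‖_∞ ≤ |α| + 1. Then the six functions R^α_β, R^α_{β−e₁}, R^α_{β−e₂}, R^{α−e₀+e₁}_{β−e₁}, R^{α−e₀+e₂}_{β−e₂}, R^{α−e₀+e₁+e₂}_β are all Lebesgue integrable on T, and ∫_T R^α_β = (1/2) · (∫_T R^α_{β−e₁} + ∫_T R^α_{β−e₂} + ∫_T R^{α−e₀+e₁}_{β−e₁} + ∫_T R^{α−e₀+e₂}_{β−e₂}) − ∫_T R^{α−e₀+e₁+e₂}_β, where all integrals are Lebesgue integrals over T. -/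

import Mathlib

open MeasureTheory

/-- The rational function `R^α_β` on the standard triangle, in the coordinates
`λ₀ = 1-x-y`, `λ₁ = x`, `λ₂ = y` (so `1-λ₀ = x+y`, `1-λ₁ = 1-x`, `1-λ₂ = 1-y`). -/
noncomputable def ratR (α₀ α₁ α₂ β₀ β₁ β₂ : ℕ) (q : ℝ × ℝ) : ℝ :=
  (1 - q.1 - q.2) ^ α₀ * q.1 ^ α₁ * q.2 ^ α₂ /
    ((q.1 + q.2) ^ β₀ * (1 - q.1) ^ β₁ * (1 - q.2) ^ β₂)

/-- The standard triangle `T ⊂ ℝ²`. -/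
def stdTri : Set (ℝ × ℝ) := {q | 0 ≤ q.1 ∧ 0 ≤ q.2 ∧ q.1 + q.2 ≤ 1}

open Set

lemma stdTri_meas : MeasurableSet stdTri := by
  have : IsClosed stdTri := by
    have h1 : IsClosed {q : ℝ × ℝ | 0 ≤ q.1} := isClosed_le continuous_const continuous_fst
    have h2 : IsClosed {q : ℝ × ℝ | 0 ≤ q.2} := isClosed_le continuous_const continuous_snd
    have h3 : IsClosed {q : ℝ × ℝ | q.1 + q.2 ≤ 1} :=
      isClosed_le (continuous_fst.add continuous_snd) continuous_const
    exact (h1.inter (h2.inter h3))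
  exact this.measurableSet

lemma int_fst : IntegrableOn (fun q : ℝ × ℝ => (1 - q.1)⁻¹) stdTri := by
  have hmeas : Measurable (fun q : ℝ × ℝ => (1 - q.1)⁻¹) :=
    (measurable_const.sub measurable_fst).inv
  constructor
  · exact hmeas.aestronglyMeasurable
  · rw [HasFiniteIntegral]
    simp only [enorm_eq_nnnorm]
    have h1 : (∫⁻ q in stdTri, (‖(1 - q.1)⁻¹‖₊ : ENNReal) ∂(volume : Measure (ℝ × ℝ)))
        = ∫⁻ q, stdTri.indicator (fun q : ℝ × ℝ => (‖(1 - q.1)⁻¹‖₊ : ENNReal)) q := by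
      rw [lintegral_indicator stdTri_meas]
    rw [h1, Measure.volume_eq_prod, lintegral_prod]
    swap
    · exact ((hmeas.nnnorm.coe_nnreal_ennreal).indicator stdTri_meas).aemeasurable
    have hinner : ∀ x : ℝ, (∫⁻ y, stdTri.indicator
        (fun q : ℝ × ℝ => (‖(1 - q.1)⁻¹‖₊ : ENNReal)) (x, y))
        ≤ (Icc (0:ℝ) 1).indicator (fun _ => (1 : ENNReal)) x := by
      intro x
      by_cases hx : x ∈ Icc (0:ℝ) 1
      · rw [indicator_of_mem hx]
        have hb : ∀ y : ℝ, stdTri.indicator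
            (fun q : ℝ × ℝ => (‖(1 - q.1)⁻¹‖₊ : ENNReal)) (x, y)
            ≤ (Icc (0:ℝ) (1 - x)).indicator (fun _ => (‖(1 - x)⁻¹‖₊ : ENNReal)) y := by
          intro y
          by_cases hy : (x, y) ∈ stdTri
          · rw [indicator_of_mem hy]
            have : y ∈ Icc (0:ℝ) (1 - x) := ⟨hy.2.1, by have := hy.2.2; linarith⟩
            rw [indicator_of_mem this]
          · rw [indicator_of_notMem hy]; exact zero_le
        calc (∫⁻ y, stdTri.indicator
            (fun q : ℝ × ℝ => (‖(1 - q.1)⁻¹‖₊ : ENNReal)) (x, y))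
            ≤ ∫⁻ y, (Icc (0:ℝ) (1 - x)).indicator (fun _ => (‖(1 - x)⁻¹‖₊ : ENNReal)) y :=
              lintegral_mono hb
          _ = (‖(1 - x)⁻¹‖₊ : ENNReal) * volume (Icc (0:ℝ) (1 - x)) := by
              rw [lintegral_indicator measurableSet_Icc, setLIntegral_const]
          _ ≤ 1 := by
              rcases eq_or_lt_of_le hx.2 with h | h
              · subst h; simp
              · have hx1 : (0:ℝ) < 1 - x := by linarith
                rw [Real.volume_Icc, ← enorm_eq_nnnorm, Real.enorm_eq_ofReal (inv_nonneg.mpr hx1.le),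
                  ← ENNReal.ofReal_mul (inv_nonneg.mpr hx1.le)]
                have : (1 - x)⁻¹ * (1 - x - 0) = 1 := by
                  rw [sub_zero, inv_mul_cancel₀ hx1.ne']
                rw [this, ENNReal.ofReal_one]
      · rw [indicator_of_notMem hx]
        have : ∀ y : ℝ, stdTri.indicator
            (fun q : ℝ × ℝ => (‖(1 - q.1)⁻¹‖₊ : ENNReal)) (x, y) = 0 := by
          intro y
          apply indicator_of_notMem
          intro hy
          rcases hy with ⟨h1', h2', h3'⟩
          simp only [Icc, mem_setOf_eq, not_and_or, not_le] at hx
          rcases hx with h | h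
          · exact absurd h1' (not_le.mpr h)
          · simp only at h1' h2' h3'; linarith
        simp only [this, lintegral_zero]; exact le_rfl
    calc (∫⁻ x, ∫⁻ y, stdTri.indicator
        (fun q : ℝ × ℝ => (‖(1 - q.1)⁻¹‖₊ : ENNReal)) (x, y))
        ≤ ∫⁻ x, (Icc (0:ℝ) 1).indicator (fun _ => (1 : ENNReal)) x := lintegral_mono hinner
      _ = volume (Icc (0:ℝ) 1) := by
          rw [lintegral_indicator measurableSet_Icc, setLIntegral_const, one_mul]
      _ < ⊤ := by rw [Real.volume_Icc]; simp

lemma int_snd : IntegrableOn (fun q : ℝ × ℝ => (1 - q.2)⁻¹) stdTri := by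
  have hswap : MeasurePreserving (Prod.swap : ℝ × ℝ → ℝ × ℝ) volume volume := by
    rw [Measure.volume_eq_prod]
    exact Measure.measurePreserving_swap
  have hpre : (Prod.swap : ℝ × ℝ → ℝ × ℝ) ⁻¹' stdTri = stdTri := by
    ext q
    constructor
    · rintro ⟨a, b, c⟩; exact ⟨b, a, by dsimp at c ⊢; linarith⟩
    · rintro ⟨a, b, c⟩; exact ⟨b, a, by dsimp at c ⊢; linarith⟩
  have h := (hswap.restrict_preimage stdTri_meas)
  rw [hpre] at h
  have := (h.integrable_comp (f := Prod.swap)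
    (g := fun q : ℝ × ℝ => (1 - q.1)⁻¹)
    ((measurable_const.sub measurable_fst).inv.aestronglyMeasurable)).mpr int_fst
  exact this

lemma ratR_nonneg (a₀ a₁ a₂ b₀ b₁ b₂ : ℕ) {q : ℝ × ℝ} (hq : q ∈ stdTri) :
    0 ≤ ratR a₀ a₁ a₂ b₀ b₁ b₂ q := by
  obtain ⟨hx, hy, hxy⟩ := hq
  have hA : (0:ℝ) ≤ 1 - q.1 := by linarith
  have hB : (0:ℝ) ≤ 1 - q.2 := by linarith
  have h0 : (0:ℝ) ≤ 1 - q.1 - q.2 := by linarith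
  have hS : (0:ℝ) ≤ q.1 + q.2 := by linarith
  unfold ratR
  apply div_nonneg
  · exact mul_nonneg (mul_nonneg (pow_nonneg h0 _) (pow_nonneg hx _)) (pow_nonneg hy _)
  · exact mul_nonneg (mul_nonneg (pow_nonneg hS _) (pow_nonneg hA _)) (pow_nonneg hB _)

lemma corner_aux (N D : ℝ) (hN0 : 0 ≤ N) (hN1 : N ≤ 1) (hD : D = 0 ∨ D = 1) :
    N / D ≤ 2 := by
  rcases hD with h | h
  · rw [h, div_zero]; norm_num
  · rw [h, div_one]; linarith

lemma ratR_le (a₀ a₁ a₂ b₁ b₂ : ℕ) (h1 : b₁ ≤ a₀ + a₂ + 1) (h2 : b₂ ≤ a₀ + a₁ + 1)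
    {q : ℝ × ℝ} (hq : q ∈ stdTri) :
    ratR a₀ a₁ a₂ 0 b₁ b₂ q ≤ 2 * (1 - q.1)⁻¹ + 2 * (1 - q.2)⁻¹ := by
  obtain ⟨hx, hy, hxy⟩ := hq
  set x := q.1 with hxdef
  set y := q.2 with hydef
  have hA0 : (0:ℝ) ≤ 1 - x := by linarith
  have hB0 : (0:ℝ) ≤ 1 - y := by linarith
  have hA1 : (1:ℝ) - x ≤ 1 := by linarith
  have hB1 : (1:ℝ) - y ≤ 1 := by linarith
  have hl0 : (0:ℝ) ≤ 1 - x - y := by linarith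
  have hR : ratR a₀ a₁ a₂ 0 b₁ b₂ q
      = (1 - x - y) ^ a₀ * x ^ a₁ * y ^ a₂ / ((1 - x) ^ b₁ * (1 - y) ^ b₂) := by
    unfold ratR; rw [← hxdef, ← hydef, pow_zero, one_mul]
  have hzz : ∀ n m : ℕ, (0:ℝ) ^ n * 0 ^ m ≤ 1 := by
    intro n m
    calc (0:ℝ) ^ n * 0 ^ m ≤ 1 * 1 :=
          mul_le_mul (zero_pow_le_one n) (zero_pow_le_one m)
            (pow_nonneg le_rfl _) zero_le_one
      _ = 1 := one_mul 1
  rcases eq_or_lt_of_le hA0 with hA | hA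
  · -- x = 1, hence y = 0
    have hx1 : x = 1 := by linarith
    have hy0 : y = 0 := by linarith
    rw [hR, hx1, hy0]
    have hD : ((1:ℝ) - 1) ^ b₁ * ((1:ℝ) - 0) ^ b₂ = 0 ∨
        ((1:ℝ) - 1) ^ b₁ * ((1:ℝ) - 0) ^ b₂ = 1 := by
      rcases Nat.eq_zero_or_pos b₁ with hb | hb
      · right; rw [hb]; norm_num
      · left; rw [show (1:ℝ) - 1 = 0 by ring, zero_pow (by omega : b₁ ≠ 0), zero_mul]
    have := corner_aux (((1:ℝ) - 1 - 0) ^ a₀ * (1:ℝ) ^ a₁ * (0:ℝ) ^ a₂)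
      (((1:ℝ) - 1) ^ b₁ * ((1:ℝ) - 0) ^ b₂)
      (by rw [show (1:ℝ) - 1 - 0 = 0 by ring]; positivity)
      (by rw [one_pow, mul_one, show (1:ℝ) - 1 - 0 = 0 by ring]; exact hzz a₀ a₂) hD
    have hrhs : (2:ℝ) ≤ 2 * ((1:ℝ) - 1)⁻¹ + 2 * ((1:ℝ) - 0)⁻¹ := by norm_num
    linarith
  rcases eq_or_lt_of_le hB0 with hB | hB
  · -- y = 1, hence x = 0
    have hy1 : y = 1 := by linarith
    have hx0 : x = 0 := by linarith
    rw [hR, hy1, hx0]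
    have hD : ((1:ℝ) - 0) ^ b₁ * ((1:ℝ) - 1) ^ b₂ = 0 ∨
        ((1:ℝ) - 0) ^ b₁ * ((1:ℝ) - 1) ^ b₂ = 1 := by
      rcases Nat.eq_zero_or_pos b₂ with hb | hb
      · right; rw [hb]; norm_num
      · left; rw [show (1:ℝ) - 1 = 0 by ring, zero_pow (by omega : b₂ ≠ 0), mul_zero]
    have := corner_aux (((1:ℝ) - 0 - 1) ^ a₀ * (0:ℝ) ^ a₁ * (1:ℝ) ^ a₂)
      (((1:ℝ) - 0) ^ b₁ * ((1:ℝ) - 1) ^ b₂)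
      (by rw [show (1:ℝ) - 0 - 1 = 0 by ring]; positivity)
      (by rw [one_pow, mul_one, show (1:ℝ) - 0 - 1 = 0 by ring]; exact hzz a₀ a₁) hD
    have hrhs : (2:ℝ) ≤ 2 * ((1:ℝ) - 0)⁻¹ + 2 * ((1:ℝ) - 1)⁻¹ := by norm_num
    linarith
  · -- main case : 0 < 1 - x, 0 < 1 - y
    have hABge : (1:ℝ) ≤ (1 - x) + (1 - y) := by linarith
    have hl0AB : (1:ℝ) - x - y ≤ (1 - x) * (1 - y) := by nlinarith
    have hyA : y ≤ 1 - x := by linarith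
    have hxB : x ≤ 1 - y := by linarith
    have hN : (1 - x - y) ^ a₀ * x ^ a₁ * y ^ a₂
        ≤ (1 - x) ^ (b₁ - 1) * (1 - y) ^ (b₂ - 1) := by
      calc (1 - x - y) ^ a₀ * x ^ a₁ * y ^ a₂
          ≤ ((1 - x) * (1 - y)) ^ a₀ * (1 - y) ^ a₁ * (1 - x) ^ a₂ := by
            gcongr <;> assumption
        _ = (1 - x) ^ (a₀ + a₂) * (1 - y) ^ (a₀ + a₁) := by
            rw [mul_pow, pow_add, pow_add]; ring
        _ ≤ (1 - x) ^ (b₁ - 1) * (1 - y) ^ (b₂ - 1) := by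
            apply mul_le_mul
            · exact pow_le_pow_of_le_one hA0 hA1 (by omega)
            · exact pow_le_pow_of_le_one hB0 hB1 (by omega)
            · positivity
            · positivity
    have hD : (0:ℝ) < (1 - x) ^ b₁ * (1 - y) ^ b₂ := by positivity
    have hstep : ratR a₀ a₁ a₂ 0 b₁ b₂ q
        ≤ (1 - x) ^ (b₁ - 1) * (1 - y) ^ (b₂ - 1) / ((1 - x) ^ b₁ * (1 - y) ^ b₂) := by
      rw [hR]
      exact (div_le_div_iff_of_pos_right hD).mpr hN
    have e1 : (1 - x) ^ (b₁ - 1) / (1 - x) ^ b₁ ≤ (1 - x)⁻¹ := by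
      rcases b₁ with _ | k
      · simp only [Nat.zero_sub, pow_zero, div_one]
        exact (one_le_inv₀ hA).mpr hA1
      · rw [Nat.succ_sub_one, pow_succ]
        rw [div_mul_eq_div_div, div_self (pow_ne_zero _ hA.ne'), one_div]
    have e2 : (1 - y) ^ (b₂ - 1) / (1 - y) ^ b₂ ≤ (1 - y)⁻¹ := by
      rcases b₂ with _ | k
      · simp only [Nat.zero_sub, pow_zero, div_one]
        exact (one_le_inv₀ hB).mpr hB1
      · rw [Nat.succ_sub_one, pow_succ]
        rw [div_mul_eq_div_div, div_self (pow_ne_zero _ hB.ne'), one_div]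
    have hsplit : (1 - x) ^ (b₁ - 1) * (1 - y) ^ (b₂ - 1) / ((1 - x) ^ b₁ * (1 - y) ^ b₂)
        ≤ (1 - x)⁻¹ * (1 - y)⁻¹ := by
      rw [← div_mul_div_comm]
      exact mul_le_mul e1 e2 (div_nonneg (by positivity) (by positivity))
        (inv_nonneg.mpr hA0)
    have hfin : (1 - x)⁻¹ * (1 - y)⁻¹ ≤ 2 * (1 - x)⁻¹ + 2 * (1 - y)⁻¹ := by
      have h3 : (1 - x)⁻¹ * (1 - y)⁻¹
          ≤ (1 - x)⁻¹ * (1 - y)⁻¹ * (2 * ((1 - x) + (1 - y))) :=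
        le_mul_of_one_le_right (by positivity) (by linarith)
      have e : (1 - x)⁻¹ * (1 - y)⁻¹ * (2 * ((1 - x) + (1 - y)))
          = 2 * (1 - x)⁻¹ + 2 * (1 - y)⁻¹ := by
        field_simp
        ring
      linarith
    linarith

lemma ratR_measurable (a₀ a₁ a₂ b₀ b₁ b₂ : ℕ) :
    Measurable (ratR a₀ a₁ a₂ b₀ b₁ b₂) := by
  unfold ratR
  exact (((((measurable_const.sub measurable_fst).sub measurable_snd).pow_const _).mul
    (measurable_fst.pow_const _)).mul (measurable_snd.pow_const _)).div
    ((((measurable_fst.add measurable_snd).pow_const _).mul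
      ((measurable_const.sub measurable_fst).pow_const _)).mul
      ((measurable_const.sub measurable_snd).pow_const _))

lemma integ (a₀ a₁ a₂ b₁ b₂ : ℕ) (h1 : b₁ ≤ a₀ + a₂ + 1) (h2 : b₂ ≤ a₀ + a₁ + 1) :
    IntegrableOn (ratR a₀ a₁ a₂ 0 b₁ b₂) stdTri := by
  apply Integrable.mono'
    (g := fun q : ℝ × ℝ => 2 * (1 - q.1)⁻¹ + 2 * (1 - q.2)⁻¹)
  · exact (int_fst.const_mul 2).add (int_snd.const_mul 2)
  · exact (ratR_measurable a₀ a₁ a₂ 0 b₁ b₂).aestronglyMeasurable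
  · rw [ae_restrict_iff' stdTri_meas]
    filter_upwards with q hq
    rw [Real.norm_eq_abs, abs_of_nonneg (ratR_nonneg a₀ a₁ a₂ 0 b₁ b₂ hq)]
    exact ratR_le a₀ a₁ a₂ b₁ b₂ h1 h2 hq

lemma line_null1 : (volume : Measure (ℝ × ℝ)) {q : ℝ × ℝ | q.1 = 1} = 0 := by
  have : {q : ℝ × ℝ | q.1 = 1} = ({1} : Set ℝ) ×ˢ (Set.univ : Set ℝ) := by
    ext q
    simp only [Set.mem_setOf_eq, Set.mem_prod, Set.mem_singleton_iff, Set.mem_univ, and_true]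
  rw [this, Measure.volume_eq_prod, Measure.prod_prod, Real.volume_singleton, zero_mul]

lemma line_null2 : (volume : Measure (ℝ × ℝ)) {q : ℝ × ℝ | q.2 = 1} = 0 := by
  have : {q : ℝ × ℝ | q.2 = 1} = (Set.univ : Set ℝ) ×ˢ ({1} : Set ℝ) := by
    ext q
    simp only [Set.mem_setOf_eq, Set.mem_prod, Set.mem_singleton_iff, Set.mem_univ, true_and]
  rw [this, Measure.volume_eq_prod, Measure.prod_prod, Real.volume_singleton, mul_zero]

lemma ae_ne_one : ∀ᵐ q : ℝ × ℝ, q.1 ≠ 1 ∧ q.2 ≠ 1 := by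
  have h : {q : ℝ × ℝ | ¬ (q.1 ≠ 1 ∧ q.2 ≠ 1)} ⊆
      {q : ℝ × ℝ | q.1 = 1} ∪ {q : ℝ × ℝ | q.2 = 1} := by
    intro q hq
    simp only [Set.mem_setOf_eq, not_and_or, not_not] at hq
    exact hq
  rw [ae_iff]
  exact measure_mono_null h (by
    exact le_antisymm ((measure_union_le _ _).trans
      (by rw [line_null1, line_null2]; simp)) zero_le)

/-- For `β₀ = 0`, `β₁, β₂ ≥ 1`, `α₀ ≥ 1` and `‖α+β‖_∞ ≤ |α|+1`, the six functions
`R^α_β`, `R^α_{β-e₁}`, `R^α_{β-e₂}`, `R^{α-e₀+e₁}_{β-e₁}`, `R^{α-e₀+e₂}_{β-e₂}`,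
`R^{α-e₀+e₁+e₂}_β` are integrable on `T` and
`∫ R^α_β = ½(∫ R^α_{β-e₁} + ∫ R^α_{β-e₂} + ∫ R^{α-e₀+e₁}_{β-e₁} + ∫ R^{α-e₀+e₂}_{β-e₂})
  − ∫ R^{α-e₀+e₁+e₂}_β`. -/
theorem integral_rec_six_term (α₀ α₁ α₂ β₀ β₁ β₂ : ℕ)
    (hβ₀ : β₀ = 0) (hβ₁ : 1 ≤ β₁) (hβ₂ : 1 ≤ β₂) (hα₀ : 1 ≤ α₀)
    (hmax : max (α₀ + β₀) (max (α₁ + β₁) (α₂ + β₂)) ≤ α₀ + α₁ + α₂ + 1) :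
    IntegrableOn (ratR α₀ α₁ α₂ β₀ β₁ β₂) stdTri ∧
    IntegrableOn (ratR α₀ α₁ α₂ β₀ (β₁ - 1) β₂) stdTri ∧
    IntegrableOn (ratR α₀ α₁ α₂ β₀ β₁ (β₂ - 1)) stdTri ∧
    IntegrableOn (ratR (α₀ - 1) (α₁ + 1) α₂ β₀ (β₁ - 1) β₂) stdTri ∧
    IntegrableOn (ratR (α₀ - 1) α₁ (α₂ + 1) β₀ β₁ (β₂ - 1)) stdTri ∧
    IntegrableOn (ratR (α₀ - 1) (α₁ + 1) (α₂ + 1) β₀ β₁ β₂) stdTri ∧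
    (∫ q in stdTri, ratR α₀ α₁ α₂ β₀ β₁ β₂ q) =
      (1 / 2) * ((∫ q in stdTri, ratR α₀ α₁ α₂ β₀ (β₁ - 1) β₂ q) +
          (∫ q in stdTri, ratR α₀ α₁ α₂ β₀ β₁ (β₂ - 1) q) +
          (∫ q in stdTri, ratR (α₀ - 1) (α₁ + 1) α₂ β₀ (β₁ - 1) β₂ q) +
          (∫ q in stdTri, ratR (α₀ - 1) α₁ (α₂ + 1) β₀ β₁ (β₂ - 1) q)) -
        (∫ q in stdTri, ratR (α₀ - 1) (α₁ + 1) (α₂ + 1) β₀ β₁ β₂ q) := by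
  subst hβ₀
  obtain ⟨c, rfl⟩ : ∃ c, β₁ = c + 1 := ⟨β₁ - 1, by omega⟩
  obtain ⟨d, rfl⟩ : ∃ d, β₂ = d + 1 := ⟨β₂ - 1, by omega⟩
  obtain ⟨e, rfl⟩ : ∃ e, α₀ = e + 1 := ⟨α₀ - 1, by omega⟩
  simp only [Nat.add_sub_cancel]
  simp only [max_le_iff] at hmax
  obtain ⟨-, hm1, hm2⟩ := hmax
  have I1 : IntegrableOn (ratR (e+1) α₁ α₂ 0 (c+1) (d+1)) stdTri :=
    integ _ _ _ _ _ (by omega) (by omega)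
  have I2 : IntegrableOn (ratR (e+1) α₁ α₂ 0 c (d+1)) stdTri :=
    integ _ _ _ _ _ (by omega) (by omega)
  have I3 : IntegrableOn (ratR (e+1) α₁ α₂ 0 (c+1) d) stdTri :=
    integ _ _ _ _ _ (by omega) (by omega)
  have I4 : IntegrableOn (ratR e (α₁+1) α₂ 0 c (d+1)) stdTri :=
    integ _ _ _ _ _ (by omega) (by omega)
  have I5 : IntegrableOn (ratR e α₁ (α₂+1) 0 (c+1) d) stdTri :=
    integ _ _ _ _ _ (by omega) (by omega)
  have I6 : IntegrableOn (ratR e (α₁+1) (α₂+1) 0 (c+1) (d+1)) stdTri :=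
    integ _ _ _ _ _ (by omega) (by omega)
  refine ⟨I1, I2, I3, I4, I5, I6, ?_⟩
  have key : (∫ q in stdTri,
        (2 * ratR (e+1) α₁ α₂ 0 (c+1) (d+1) q + 2 * ratR e (α₁+1) (α₂+1) 0 (c+1) (d+1) q)) =
      ∫ q in stdTri,
        (ratR (e+1) α₁ α₂ 0 c (d+1) q + ratR (e+1) α₁ α₂ 0 (c+1) d q +
          ratR e (α₁+1) α₂ 0 c (d+1) q + ratR e α₁ (α₂+1) 0 (c+1) d q) := by
    apply setIntegral_congr_ae stdTri_meas
    filter_upwards [ae_ne_one] with q hq _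
    obtain ⟨h1, h2⟩ := hq
    have hA : (1:ℝ) - q.1 ≠ 0 := sub_ne_zero.mpr (Ne.symm h1)
    have hB : (1:ℝ) - q.2 ≠ 0 := sub_ne_zero.mpr (Ne.symm h2)
    unfold ratR
    simp only [pow_zero, one_mul]
    field_simp
    ring
  have J23 : Integrable (fun q : ℝ × ℝ =>
      ratR (e+1) α₁ α₂ 0 c (d+1) q + ratR (e+1) α₁ α₂ 0 (c+1) d q)
      (volume.restrict stdTri) := I2.add I3
  have J234 : Integrable (fun q : ℝ × ℝ =>
      ratR (e+1) α₁ α₂ 0 c (d+1) q + ratR (e+1) α₁ α₂ 0 (c+1) d q +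
        ratR e (α₁+1) α₂ 0 c (d+1) q) (volume.restrict stdTri) := J23.add I4
  have K1 : Integrable (fun q : ℝ × ℝ => 2 * ratR (e+1) α₁ α₂ 0 (c+1) (d+1) q)
      (volume.restrict stdTri) := I1.const_mul 2
  have K6 : Integrable (fun q : ℝ × ℝ => 2 * ratR e (α₁+1) (α₂+1) 0 (c+1) (d+1) q)
      (volume.restrict stdTri) := I6.const_mul 2
  have L : (∫ q in stdTri,
        (2 * ratR (e+1) α₁ α₂ 0 (c+1) (d+1) q + 2 * ratR e (α₁+1) (α₂+1) 0 (c+1) (d+1) q)) =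
      2 * (∫ q in stdTri, ratR (e+1) α₁ α₂ 0 (c+1) (d+1) q) +
      2 * (∫ q in stdTri, ratR e (α₁+1) (α₂+1) 0 (c+1) (d+1) q) := by
    rw [integral_add K1 K6, integral_const_mul, integral_const_mul]
  have R : (∫ q in stdTri,
        (ratR (e+1) α₁ α₂ 0 c (d+1) q + ratR (e+1) α₁ α₂ 0 (c+1) d q +
          ratR e (α₁+1) α₂ 0 c (d+1) q + ratR e α₁ (α₂+1) 0 (c+1) d q)) =
      (∫ q in stdTri, ratR (e+1) α₁ α₂ 0 c (d+1) q) +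
      (∫ q in stdTri, ratR (e+1) α₁ α₂ 0 (c+1) d q) +
      (∫ q in stdTri, ratR e (α₁+1) α₂ 0 c (d+1) q) +
      (∫ q in stdTri, ratR e α₁ (α₂+1) 0 (c+1) d q) := by
    rw [integral_add J234 I5, integral_add J23 I4, integral_add I2 I3]
  rw [L, R] at key
  linarith
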